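/- The speed function v does not admit a unique limit at the corner (0,1) of T: for every c ∈ [0,+∞) there exists a sequence (ρⁿ) of points of T with ρⁿ → (0,1) and v(ρⁿ) → c, and there also exists a sequence (ρⁿ) of points of T with ρⁿ → (0,1) and v(ρⁿ) → +∞. -/

import Mathlib

open Real Filter

/-- The speed function of the Borodin-Ferrari dynamics, with the convention `v (0,0) = 0`. -/
noncomputable def speed (ρ : ℝ × ℝ) : ℝ :=
  if ρ = (0, 0) then 0
  else (1 / π) * (Real.sin (π * ρ.1) * Real.sin (π * ρ.2) / Real.sin (π * (ρ.1 + ρ.2)))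

/-- The triangle `T` on which the speed function is defined. -/
def T : Set (ℝ × ℝ) := {ρ | 0 ≤ ρ.1 ∧ 0 ≤ ρ.2 ∧ ρ.1 + ρ.2 < 1}

lemma sinc_lim : Tendsto (fun x : ℝ => Real.sin x / x) (nhdsWithin 0 {0}ᶜ) (nhds 1) := by
  have h := Real.hasDerivAt_sin 0
  rw [hasDerivAt_iff_tendsto_slope] at h
  simpa [slope_fun_def, Real.cos_zero, div_eq_inv_mul] using h

lemma fact_lim {a : ℕ → ℝ} (hpos : ∀ n, 0 < a n) (h0 : Tendsto a atTop (nhds 0)) :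
    Tendsto (fun n => Real.sin (π * a n) / (π * a n)) atTop (nhds 1) := by
  apply sinc_lim.comp
  rw [tendsto_nhdsWithin_iff]
  constructor
  · simpa using (tendsto_const_nhds (x := π)).mul h0
  · exact Eventually.of_forall fun n => by
      have := hpos n
      simp [Set.mem_compl_iff, ne_of_gt (mul_pos Real.pi_pos this)]

lemma fact_lim_inv {a : ℕ → ℝ} (hpos : ∀ n, 0 < a n) (h0 : Tendsto a atTop (nhds 0)) :
    Tendsto (fun n => (π * a n) / Real.sin (π * a n)) atTop (nhds 1) := by
  have h := (fact_lim hpos h0).inv₀ one_ne_zero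
  simpa [inv_div] using h

lemma sin_pi_mul_pos {e : ℝ} (he : 0 < e) (he1 : e < 1) : 0 < Real.sin (π * e) := by
  apply Real.sin_pos_of_pos_of_lt_pi (mul_pos Real.pi_pos he)
  nlinarith [Real.pi_pos]

lemma speed_eq {a e : ℝ} (ha : 0 < a) (he : 0 < e) (he1 : e < 1) :
    speed (a, 1 - a - e) =
      (Real.sin (π * a) / (π * a)) * (Real.sin (π * (a + e)) / (π * (a + e)))
        * ((π * e) / Real.sin (π * e)) * (a * (a + e) / e) := by
  have hπ := Real.pi_pos
  have hne : ((a, 1 - a - e) : ℝ × ℝ) ≠ (0, 0) := by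
    intro h; rw [Prod.mk.injEq] at h; exact (ne_of_gt ha) h.1
  rw [speed, if_neg hne]
  have h1 : Real.sin (π * (1 - a - e)) = Real.sin (π * (a + e)) := by
    rw [show π * (1 - a - e) = π - π * (a + e) by ring, Real.sin_pi_sub]
  have h2 : Real.sin (π * (a + (1 - a - e))) = Real.sin (π * e) := by
    rw [show π * (a + (1 - a - e)) = π - π * e by ring, Real.sin_pi_sub]
  norm_num
  simp only [h1, h2]
  have hs : Real.sin (π * e) ≠ 0 := ne_of_gt (sin_pi_mul_pos he he1)
  field_simp

/-- Main limit lemma along the path `(a n, 1 - a n - e n)`. -/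
lemma speed_tendsto {a e : ℕ → ℝ} (hapos : ∀ n, 0 < a n) (hepos : ∀ n, 0 < e n)
    (he1 : ∀ n, e n < 1)
    (ha0 : Tendsto a atTop (nhds 0)) (he0 : Tendsto e atTop (nhds 0)) {l : Filter ℝ}
    (hq : Tendsto (fun n => a n * (a n + e n) / e n) atTop l) :
    Tendsto (fun n => speed (a n, 1 - a n - e n) / (a n * (a n + e n) / e n))
      atTop (nhds 1) := by
  have hae : ∀ n, 0 < a n + e n := fun n => add_pos (hapos n) (hepos n)
  have hq0 : ∀ n, a n * (a n + e n) / e n ≠ 0 := fun n =>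
    ne_of_gt (div_pos (mul_pos (hapos n) (hae n)) (hepos n))
  have key : ∀ n, speed (a n, 1 - a n - e n) / (a n * (a n + e n) / e n) =
      (Real.sin (π * a n) / (π * a n)) * (Real.sin (π * (a n + e n)) / (π * (a n + e n)))
        * ((π * e n) / Real.sin (π * e n)) := by
    intro n
    rw [speed_eq (hapos n) (hepos n) (he1 n), mul_div_assoc, div_self (hq0 n), mul_one]
  simp only [key]
  have h1 := fact_lim hapos ha0
  have h2 := fact_lim hae (by simpa using ha0.add he0)
  have h3 := fact_lim_inv hepos he0
  simpa using (h1.mul h2).mul h3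

lemma shift_atTop : Tendsto (fun n : ℕ => (n : ℝ) + 8) atTop atTop :=
  tendsto_atTop_add_const_right atTop 8 tendsto_natCast_atTop_atTop

lemma inv_shift_lim : Tendsto (fun n : ℕ => ((n : ℝ) + 8)⁻¹) atTop (nhds 0) :=
  tendsto_inv_atTop_zero.comp shift_atTop

/-- The speed function does not admit a unique limit at the corner `(0,1)` of `T`:
every value `c ∈ [0,∞)` as well as `+∞` arises as a limit along a sequence in `T`
converging to `(0,1)`. -/
theorem stmt7 :
    (∀ c : ℝ, 0 ≤ c → ∃ ρ : ℕ → ℝ × ℝ, (∀ n, ρ n ∈ T) ∧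
      Tendsto ρ atTop (nhds ((0, 1) : ℝ × ℝ)) ∧
      Tendsto (fun n => speed (ρ n)) atTop (nhds c)) ∧
    (∃ ρ : ℕ → ℝ × ℝ, (∀ n, ρ n ∈ T) ∧
      Tendsto ρ atTop (nhds ((0, 1) : ℝ × ℝ)) ∧
      Tendsto (fun n => speed (ρ n)) atTop atTop) := by
  constructor
  · intro c hc
    rcases eq_or_lt_of_le hc with hc0 | hc0
    · -- c = 0 : take ρ n = (0, 1 - (n+8)⁻¹)
      refine ⟨fun n => (0, 1 - ((n : ℝ) + 8)⁻¹), ?_, ?_, ?_⟩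
      · intro n
        have h8 : (0:ℝ) < (n : ℝ) + 8 := by positivity
        have hle : ((n : ℝ) + 8)⁻¹ ≤ 1 :=
          inv_le_one_of_one_le₀ (by linarith [Nat.cast_nonneg (α := ℝ) n])
        refine ⟨le_refl 0, by simpa using hle, ?_⟩
        simp only [zero_add]
        have : (0:ℝ) < ((n : ℝ) + 8)⁻¹ := by positivity
        linarith
      · exact (tendsto_const_nhds).prodMk_nhds
          (by simpa using (tendsto_const_nhds (x := (1:ℝ))).sub inv_shift_lim)
      · have : ∀ n : ℕ, speed (0, 1 - ((n : ℝ) + 8)⁻¹) = 0 := by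
          intro n
          rw [speed]
          split
          · rfl
          · simp
        simp only [this]
        rw [← hc0]
        exact tendsto_const_nhds
    · -- c > 0 : take a n = sqrt (c * e n), e n = (c+1)⁻¹ * (n+8)⁻¹
      set e : ℕ → ℝ := fun n => (c + 1)⁻¹ * ((n : ℝ) + 8)⁻¹ with he_def
      set a : ℕ → ℝ := fun n => Real.sqrt (c * e n) with ha_def
      have hc1 : (0:ℝ) < c + 1 := by linarith
      have hepos : ∀ n, 0 < e n := fun n => by positivity
      have hce : ∀ n, c * e n ≤ 4⁻¹ := by
        intro n
        have h8 : (8:ℝ) ≤ (n : ℝ) + 8 := by linarith [Nat.cast_nonneg (α := ℝ) n]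
        have h1 : c * (c + 1)⁻¹ ≤ 1 := by
          rw [mul_inv_le_iff₀ hc1]; linarith
        have h2 : ((n : ℝ) + 8)⁻¹ ≤ 8⁻¹ := by
          apply inv_anti₀ (by norm_num) h8
        calc c * e n = (c * (c + 1)⁻¹) * ((n : ℝ) + 8)⁻¹ := by rw [he_def]; ring
          _ ≤ 1 * 8⁻¹ := by
              apply mul_le_mul h1 h2 (by positivity) (by norm_num)
          _ ≤ 4⁻¹ := by norm_num
      have hapos : ∀ n, 0 < a n := fun n =>
        Real.sqrt_pos.2 (mul_pos hc0 (hepos n))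
      have hale : ∀ n, a n ≤ 2⁻¹ := by
        intro n
        rw [ha_def]
        calc Real.sqrt (c * e n) ≤ Real.sqrt 4⁻¹ := Real.sqrt_le_sqrt (hce n)
          _ = 2⁻¹ := by
            rw [show (4:ℝ)⁻¹ = 2⁻¹ ^ 2 by norm_num, Real.sqrt_sq (by norm_num)]
      have hele : ∀ n, e n ≤ 8⁻¹ := by
        intro n
        have h8 : (8:ℝ) ≤ (n : ℝ) + 8 := by linarith [Nat.cast_nonneg (α := ℝ) n]
        have h1 : (c + 1)⁻¹ ≤ 1 := inv_le_one_of_one_le₀ (by linarith)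
        calc e n ≤ 1 * ((n : ℝ) + 8)⁻¹ := by
              rw [he_def]
              apply mul_le_mul_of_nonneg_right h1 (by positivity)
          _ ≤ 8⁻¹ := by
              rw [one_mul]; exact inv_anti₀ (by norm_num) h8
      have he1 : ∀ n, e n < 1 := fun n => lt_of_le_of_lt (hele n) (by norm_num)
      have haelt : ∀ n, a n + e n < 1 := fun n => by
        have := hale n; have := hele n; linarith
      have he0 : Tendsto e atTop (nhds 0) := by
        simpa using (tendsto_const_nhds (x := (c+1)⁻¹)).mul inv_shift_lim
      have ha0 : Tendsto a atTop (nhds 0) := by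
        have : Tendsto (fun n => c * e n) atTop (nhds 0) := by
          simpa using (tendsto_const_nhds (x := c)).mul he0
        have hs := (Real.continuous_sqrt.tendsto 0).comp this
        simpa [ha_def, Function.comp_def] using hs
      have hquot : ∀ n, a n * (a n + e n) / e n = c + a n := by
        intro n
        have hsq : a n * a n = c * e n :=
          Real.mul_self_sqrt (le_of_lt (mul_pos hc0 (hepos n)))
        have hene : e n ≠ 0 := ne_of_gt (hepos n)
        field_simp
        nlinarith [hsq]
      have hq : Tendsto (fun n => a n * (a n + e n) / e n) atTop (nhds c) := by
        simp only [hquot]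
        simpa using (tendsto_const_nhds (x := c)).add ha0
      have hmain := speed_tendsto hapos hepos he1 ha0 he0 hq
      refine ⟨fun n => (a n, 1 - a n - e n), ?_, ?_, ?_⟩
      · intro n
        refine ⟨le_of_lt (hapos n), by have := haelt n; simp; linarith, ?_⟩
        simp only
        have := hepos n; linarith
      · refine ha0.prodMk_nhds ?_
        have := ((tendsto_const_nhds (x := (1:ℝ))).sub ha0).sub he0
        simpa using this
      · have hq0 : ∀ n, a n * (a n + e n) / e n ≠ 0 := fun n =>
          ne_of_gt (div_pos (mul_pos (hapos n) (add_pos (hapos n) (hepos n))) (hepos n))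
        have hm := hmain.mul hq
        rw [one_mul] at hm
        exact hm.congr fun n => div_mul_cancel₀ _ (hq0 n)
  · -- divergent limit: a n = (n+8)⁻¹, e n = (n+8)⁻³
    set a : ℕ → ℝ := fun n => ((n : ℝ) + 8)⁻¹ with ha_def
    set e : ℕ → ℝ := fun n => (((n : ℝ) + 8)⁻¹) ^ 3 with he_def
    have hu : ∀ n : ℕ, (8:ℝ) ≤ (n : ℝ) + 8 := fun n => by
      linarith [Nat.cast_nonneg (α := ℝ) n]
    have hu0 : ∀ n : ℕ, (0:ℝ) < (n : ℝ) + 8 := fun n => by positivity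
    have hapos : ∀ n, 0 < a n := fun n => by positivity
    have hepos : ∀ n, 0 < e n := fun n => by positivity
    have hale : ∀ n, a n ≤ 8⁻¹ := fun n => inv_anti₀ (by norm_num) (hu n)
    have hele : ∀ n, e n ≤ 8⁻¹ := by
      intro n
      have h1 := hale n
      have h2 := le_of_lt (hapos n)
      calc e n = a n ^ 3 := rfl
        _ ≤ (8⁻¹ : ℝ) ^ 3 := pow_le_pow_left₀ h2 h1 3
        _ ≤ 8⁻¹ := by norm_num
    have he1 : ∀ n, e n < 1 := fun n => lt_of_le_of_lt (hele n) (by norm_num)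
    have haelt : ∀ n, a n + e n < 1 := fun n => by
      have := hale n; have := hele n; linarith
    have ha0 : Tendsto a atTop (nhds 0) := inv_shift_lim
    have he0 : Tendsto e atTop (nhds 0) := by
      have h := inv_shift_lim.pow 3
      rw [show (0:ℝ) ^ 3 = 0 by norm_num] at h
      exact h
    have hquot : ∀ n, a n * (a n + e n) / e n = ((n : ℝ) + 8) + ((n : ℝ) + 8)⁻¹ := by
      intro n
      have hne : ((n : ℝ) + 8) ≠ 0 := ne_of_gt (hu0 n)
      rw [ha_def, he_def]
      field_simp
    have hq : Tendsto (fun n => a n * (a n + e n) / e n) atTop atTop := by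
      simp only [hquot]
      exact shift_atTop.atTop_add_nonneg fun n => inv_nonneg.2 (le_of_lt (hu0 n))
    have hmain := speed_tendsto hapos hepos he1 ha0 he0 hq
    have hq0 : ∀ n, a n * (a n + e n) / e n ≠ 0 := fun n =>
      ne_of_gt (div_pos (mul_pos (hapos n) (add_pos (hapos n) (hepos n))) (hepos n))
    refine ⟨fun n => (a n, 1 - a n - e n), ?_, ?_, ?_⟩
    · intro n
      refine ⟨le_of_lt (hapos n), by have := haelt n; simp; linarith, ?_⟩
      simp only
      have := hepos n; linarith
    · refine ha0.prodMk_nhds ?_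
      have := ((tendsto_const_nhds (x := (1:ℝ))).sub ha0).sub he0
      simpa using this
    · have hm := hmain.pos_mul_atTop one_pos hq
      exact hm.congr fun n => div_mul_cancel₀ _ (hq0 n)
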